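/- Let d ≥ 1, σ > d/2, t ∈ ℝ. Let f : ℤ^d × ℝ^d → ℂ with ‖f‖_{L²} < ∞, g : ℤ^d × ℝ^d → ℂ with Σ_k ∫ ⟨k⟩^(2σ)|g_k(η)|² dη < ∞, and h ∈ ℓ²(ℤ^d). Then there is a constant C depending only on d, σ with |Σ_{k,ℓ ∈ ℤ^d} ∫_{ℝ^d} f_k(η)·h_ℓ·g_{k-ℓ}(η - tℓ) dη| ≤ C·‖f‖_{L²}·(Σ_k ∫ ⟨k⟩^(2σ)|g_k(η)|² dη)^(1/2)·‖h‖_{ℓ²}. -/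

import Mathlib

open MeasureTheory

/-- Japanese bracket. -/
noncomputable def jb (x : ℝ) : ℝ := Real.sqrt (1 + x ^ 2)

/-- ℓ¹ norm of an integer frequency vector. -/
noncomputable def znorm {d : ℕ} (k : Fin d → ℤ) : ℝ := ∑ i, |(k i : ℝ)|


-- Cauchy-Schwarz for tsums
lemma tsum_cs {ι : Type*} {a b : ι → ℝ} (ha : ∀ i, 0 ≤ a i) (hb : ∀ i, 0 ≤ b i)
    (ha2 : Summable (fun i => a i ^ 2)) (hb2 : Summable (fun i => b i ^ 2)) :
    Summable (fun i => a i * b i) ∧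
      ∑' i, a i * b i ≤ Real.sqrt (∑' i, a i ^ 2) * Real.sqrt (∑' i, b i ^ 2) := by
  have hsum : Summable (fun i => a i * b i) := by
    apply Summable.of_nonneg_of_le (fun i => mul_nonneg (ha i) (hb i))
      (fun i => ?_) ((ha2.add hb2).div_const 2)
    have := two_mul_le_add_sq (a i) (b i)
    nlinarith [sq_nonneg (a i - b i)]
  refine ⟨hsum, Summable.tsum_le_of_sum_le hsum fun s => ?_⟩
  have h1 : (∑ i ∈ s, a i * b i) ^ 2 ≤ (∑ i ∈ s, a i ^ 2) * (∑ i ∈ s, b i ^ 2) :=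
    Finset.sum_mul_sq_le_sq_mul_sq s a b
  have h2 : ∑ i ∈ s, a i ^ 2 ≤ ∑' i, a i ^ 2 :=
    Summable.sum_le_tsum s (fun i _ => sq_nonneg _) ha2
  have h3 : ∑ i ∈ s, b i ^ 2 ≤ ∑' i, b i ^ 2 :=
    Summable.sum_le_tsum s (fun i _ => sq_nonneg _) hb2
  have hnn : 0 ≤ ∑ i ∈ s, a i * b i :=
    Finset.sum_nonneg fun i _ => mul_nonneg (ha i) (hb i)
  calc ∑ i ∈ s, a i * b i = Real.sqrt ((∑ i ∈ s, a i * b i) ^ 2) := by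
        rw [Real.sqrt_sq hnn]
    _ ≤ Real.sqrt ((∑' i, a i ^ 2) * (∑' i, b i ^ 2)) := by
        apply Real.sqrt_le_sqrt
        calc (∑ i ∈ s, a i * b i) ^ 2 ≤ (∑ i ∈ s, a i ^ 2) * (∑ i ∈ s, b i ^ 2) := h1
          _ ≤ (∑' i, a i ^ 2) * (∑' i, b i ^ 2) := by
              apply mul_le_mul h2 h3 (Finset.sum_nonneg fun i _ => sq_nonneg _)
              exact tsum_nonneg fun i => sq_nonneg _
    _ = _ := Real.sqrt_mul (tsum_nonneg fun i => sq_nonneg _) _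

lemma one_dim_summable {p : ℝ} (hp : 1 < p) :
    Summable (fun k : ℤ => ((1 + |(k : ℝ)|) / 2) ^ (-p)) := by
  have hbase := (Real.summable_one_div_int_add_rpow (1/2) p).mpr hp
  apply Summable.of_nonneg_of_le (fun k => Real.rpow_nonneg (by positivity) _)
    (fun k => ?_) (hbase.mul_left ((2:ℝ) ^ p))
  have h1 : (0:ℝ) < |(k:ℝ) + 1/2| := by
    rcases lt_or_ge (k:ℝ) 0 with h | h
    · have hk : k ≤ -1 := by
        have : k < 0 := by exact_mod_cast h
        omega
      have hk' : (k:ℝ) ≤ -1 := by exact_mod_cast hk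
      rw [abs_of_neg (by linarith)]; linarith
    · rw [abs_of_nonneg (by linarith)]; linarith
  have h2 : |(k:ℝ) + 1/2| ≤ 1 + |(k:ℝ)| := by
    calc |(k:ℝ) + 1/2| ≤ |(k:ℝ)| + |(1:ℝ)/2| := abs_add_le _ _
      _ ≤ 1 + |(k:ℝ)| := by rw [abs_of_nonneg (by norm_num : (0:ℝ) ≤ 1/2)]; linarith
  have key : ((1 + |(k:ℝ)|) / 2) ^ (-p) ≤ (|(k:ℝ) + 1/2| / 2) ^ (-p) :=
    Real.rpow_le_rpow_of_nonpos (by positivity) (by linarith) (by linarith)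
  refine key.trans (le_of_eq ?_)
  rw [Real.div_rpow (abs_nonneg _) (by norm_num : (0:ℝ) ≤ 2),
    Real.rpow_neg (abs_nonneg _), Real.rpow_neg (by norm_num : (0:ℝ) ≤ 2),
    div_eq_mul_inv, inv_inv, one_div, mul_comm]
  rw [one_div]

-- summability over the lattice of products
lemma summable_pi_prod {c : ℤ → ℝ} (hc : ∀ k, 0 ≤ c k) (h : Summable c) :
    ∀ n : ℕ, Summable (fun m : Fin n → ℤ => ∏ i, c (m i)) := by
  intro n
  induction n with
  | zero => exact summable_of_finite_support (Set.toFinite _)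
  | succ n ih =>
    have hs : Summable (fun p : ℤ × (Fin n → ℤ) => c p.1 * ∏ i, c (p.2 i)) :=
      Summable.mul_of_nonneg (f := c) (g := fun m : Fin n → ℤ => ∏ i, c (m i)) h ih hc
        (fun m => Finset.prod_nonneg fun i _ => hc (m i))
    have hs2 : Summable ((fun m : Fin (n+1) → ℤ => ∏ i, c (m i)) ∘ (Fin.consEquiv fun _ => ℤ)) := by
      apply hs.congr
      intro p
      have hp : ((Fin.consEquiv fun _ : Fin (n+1) => ℤ) p) = Fin.cons p.1 p.2 := rfl
      simp only [Function.comp_apply, hp, Fin.prod_univ_succ, Fin.cons_zero, Fin.cons_succ]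
    exact ((Fin.consEquiv fun _ => ℤ).summable_iff).mp hs2

lemma jb_one_le (x : ℝ) : 1 ≤ jb x := by
  have h := Real.sqrt_le_sqrt (show (1:ℝ) ≤ 1 + x^2 by nlinarith [sq_nonneg x])
  simpa [jb] using h

lemma le_jb_of_nonneg {x : ℝ} (hx : 0 ≤ x) : x ≤ jb x := by
  rw [jb]
  nlinarith [Real.sq_sqrt (by positivity : (0:ℝ) ≤ 1 + x^2),
    Real.sqrt_nonneg (1 + x^2)]

lemma jb_pos (x : ℝ) : 0 < jb x := lt_of_lt_of_le one_pos (jb_one_le x)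

lemma znorm_nonneg {d : ℕ} (m : Fin d → ℤ) : 0 ≤ znorm m :=
  Finset.sum_nonneg fun i _ => abs_nonneg _

lemma abs_le_znorm {d : ℕ} (m : Fin d → ℤ) (i : Fin d) : |(m i : ℝ)| ≤ znorm m :=
  Finset.single_le_sum (f := fun j => |(m j : ℝ)|) (fun j _ => abs_nonneg _) (Finset.mem_univ i)

lemma jb_neg_summable (d : ℕ) (hd : 1 ≤ d) (σ : ℝ) (hσ : (d:ℝ)/2 < σ) :
    Summable (fun m : Fin d → ℤ => jb (znorm m) ^ (-(2*σ))) := by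
  set p : ℝ := 2*σ/d with hp_def
  have hd0 : (0:ℝ) < d := by exact_mod_cast hd
  have hp : 1 < p := by rw [hp_def, lt_div_iff₀ hd0]; linarith
  set c : ℤ → ℝ := fun k => ((1 + |(k:ℝ)|)/2) ^ (-p) with hc_def
  have hc0 : ∀ k, 0 ≤ c k := fun k => Real.rpow_nonneg (by positivity) _
  have hcs : Summable c := one_dim_summable hp
  apply Summable.of_nonneg_of_le (fun m => Real.rpow_nonneg (jb_pos _).le _)
    (fun m => ?_) (summable_pi_prod hc0 hcs d)
  -- bound jb(znorm m)^(-(2σ)) ≤ ∏ c (m i)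
  have hjb := jb_pos (znorm m)
  have hfac : ∀ i, (1 + |(m i : ℝ)|)/2 ≤ jb (znorm m) := by
    intro i
    have h1 := jb_one_le (znorm m)
    have h2 := (abs_le_znorm m i).trans (le_jb_of_nonneg (znorm_nonneg m))
    linarith
  have hprod : ∏ i, (1 + |(m i : ℝ)|)/2 ≤ jb (znorm m) ^ (d:ℕ) := by
    calc ∏ i, (1 + |(m i : ℝ)|)/2 ≤ ∏ _i : Fin d, jb (znorm m) :=
          Finset.prod_le_prod (fun i _ => by positivity) (fun i _ => hfac i)
      _ = jb (znorm m) ^ (d:ℕ) := by rw [Finset.prod_const, Finset.card_univ, Fintype.card_fin]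
  have key : jb (znorm m) ^ (-(2*σ)) = (jb (znorm m) ^ (d:ℕ)) ^ (-p) := by
    rw [← Real.rpow_natCast (jb (znorm m)) d, ← Real.rpow_mul hjb.le]
    congr 1
    have hdp : (d:ℝ) * p = 2*σ := by rw [hp_def]; field_simp [hd0.ne']
    linarith
  rw [key]
  calc (jb (znorm m) ^ (d:ℕ)) ^ (-p) ≤ (∏ i, (1 + |(m i : ℝ)|)/2) ^ (-p) :=
        Real.rpow_le_rpow_of_nonpos (Finset.prod_pos fun i _ => by positivity) hprod
          (by linarith)
    _ = ∏ i, c (m i) :=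
        (Real.finset_prod_rpow Finset.univ (fun i => (1 + |(m i : ℝ)|)/2)
          (fun i _ => by positivity) (-p)).symm


lemma holder_pt {d : ℕ} (F G : (Fin d → ℝ) → ℂ) (c : ℂ) (v : Fin d → ℝ)
    (hF : MemLp F 2 volume) (hG : MemLp G 2 volume) :
    ‖∫ η : Fin d → ℝ, F η * c * G (fun i => η i - v i)‖ ≤
      ‖c‖ * (Real.sqrt (∫ η : Fin d → ℝ, ‖F η‖ ^ 2) *
        Real.sqrt (∫ η : Fin d → ℝ, ‖G η‖ ^ 2)) := by
  have hmp : MeasurePreserving (fun η : Fin d → ℝ => η - v) volume volume :=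
    measurePreserving_sub_right volume v
  have hGt : MemLp (fun η : Fin d → ℝ => G (η - v)) 2 volume :=
    hG.comp_measurePreserving hmp
  have hkey : ‖∫ η : Fin d → ℝ, F η * c * G (fun i => η i - v i)‖ =
      ‖∫ η : Fin d → ℝ, F η * c * G (η - v)‖ := rfl
  rw [hkey]
  have h2 : ENNReal.ofReal (2:ℝ) = 2 := by norm_num
  have hconj : Real.HolderConjugate 2 2 := Real.HolderConjugate.two_two
  calc ‖∫ η : Fin d → ℝ, F η * c * G (η - v)‖
      ≤ ∫ η : Fin d → ℝ, ‖F η * c * G (η - v)‖ := norm_integral_le_integral_norm _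
    _ = ∫ η : Fin d → ℝ, ‖c‖ * (‖F η‖ * ‖G (η - v)‖) := by
        congr 1; funext η; rw [norm_mul, norm_mul]; ring
    _ = ‖c‖ * ∫ η : Fin d → ℝ, ‖F η‖ * ‖G (η - v)‖ := integral_const_mul _ _
    _ ≤ ‖c‖ * ((∫ η : Fin d → ℝ, ‖F η‖ ^ (2:ℝ)) ^ ((1:ℝ)/2) *
        (∫ η : Fin d → ℝ, ‖G (η - v)‖ ^ (2:ℝ)) ^ ((1:ℝ)/2)) := by
        apply mul_le_mul_of_nonneg_left _ (norm_nonneg c)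
        exact integral_mul_norm_le_Lp_mul_Lq hconj (h2 ▸ hF) (h2 ▸ hGt)
    _ = ‖c‖ * (Real.sqrt (∫ η : Fin d → ℝ, ‖F η‖ ^ 2) *
        Real.sqrt (∫ η : Fin d → ℝ, ‖G η‖ ^ 2)) := by
        have hGi : (∫ η : Fin d → ℝ, ‖G (η - v)‖ ^ (2:ℕ)) =
            ∫ η : Fin d → ℝ, ‖G η‖ ^ (2:ℕ) :=
          integral_sub_right_eq_self (fun η => ‖G η‖ ^ (2:ℕ)) v
        simp_rw [show (2:ℝ) = ((2:ℕ):ℝ) by norm_num, Real.rpow_natCast]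
        rw [hGi, Real.sqrt_eq_rpow, Real.sqrt_eq_rpow]
        norm_num

theorem stmt_9 (d : ℕ) (hd : 1 ≤ d) (σ : ℝ) (hσ : (d : ℝ) / 2 < σ) :
    ∃ C : ℝ, 0 < C ∧
      ∀ (t : ℝ) (f g : (Fin d → ℤ) → (Fin d → ℝ) → ℂ) (h : (Fin d → ℤ) → ℂ),
        (∀ k, MemLp (f k) 2 volume) →
        Summable (fun k => ∫ η : Fin d → ℝ, ‖f k η‖ ^ 2) →
        (∀ k, MemLp (g k) 2 volume) →
        Summable (fun k => ∫ η : Fin d → ℝ, jb (znorm k) ^ (2 * σ) * ‖g k η‖ ^ 2) →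
        Summable (fun k => ‖h k‖ ^ 2) →
        ‖∑' k : Fin d → ℤ, ∑' ℓ : Fin d → ℤ,
            ∫ η : Fin d → ℝ, f k η * h ℓ * g (k - ℓ) (fun i => η i - t * (ℓ i : ℝ))‖ ≤
          C * Real.sqrt (∑' k : Fin d → ℤ, ∫ η : Fin d → ℝ, ‖f k η‖ ^ 2) *
            Real.sqrt (∑' k : Fin d → ℤ,
              ∫ η : Fin d → ℝ, jb (znorm k) ^ (2 * σ) * ‖g k η‖ ^ 2) *
            Real.sqrt (∑' k : Fin d → ℤ, ‖h k‖ ^ 2) := by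
  classical
  have hκ := jb_neg_summable d hd σ hσ
  set K : ℝ := Real.sqrt (∑' m : Fin d → ℤ, jb (znorm m) ^ (-(2*σ))) with hK_def
  have hK0 : 0 ≤ K := Real.sqrt_nonneg _
  refine ⟨K + 1, by linarith, ?_⟩
  intro t f g h hf hf2 hg hg2 hh
  -- abbreviations
  set A : (Fin d → ℤ) → ℝ := fun k => Real.sqrt (∫ η : Fin d → ℝ, ‖f k η‖ ^ 2) with hA_def
  set B : (Fin d → ℤ) → ℝ := fun ℓ => ‖h ℓ‖ with hB_def
  set Cg : (Fin d → ℤ) → ℝ := fun m => Real.sqrt (∫ η : Fin d → ℝ, ‖g m η‖ ^ 2) with hCg_def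
  have hAnn : ∀ k, 0 ≤ A k := fun k => Real.sqrt_nonneg _
  have hBnn : ∀ k, 0 ≤ B k := fun k => norm_nonneg _
  have hCnn : ∀ k, 0 ≤ Cg k := fun k => Real.sqrt_nonneg _
  have hfint : ∀ k, (0:ℝ) ≤ ∫ η : Fin d → ℝ, ‖f k η‖ ^ 2 :=
    fun k => integral_nonneg fun η => by positivity
  have hgint : ∀ k, (0:ℝ) ≤ ∫ η : Fin d → ℝ, ‖g k η‖ ^ 2 :=
    fun k => integral_nonneg fun η => by positivity
  have hA2 : Summable (fun k => A k ^ 2) :=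
    hf2.congr fun k => (Real.sq_sqrt (hfint k)).symm
  have hB2 : Summable (fun k => B k ^ 2) := hh
  -- weighted norm of g
  have hjbp : ∀ m : Fin d → ℤ, (0:ℝ) < jb (znorm m) := fun m => jb_pos _
  have hsq : ∀ (x r : ℝ), 0 < x → (x ^ r) ^ 2 = x ^ (2 * r) := by
    intro x r hx
    rw [← Real.rpow_natCast (x ^ r) 2, ← Real.rpow_mul hx.le]
    congr 1
    push_cast
    ring
  have hW : ∀ m, (∫ η : Fin d → ℝ, jb (znorm m) ^ (2 * σ) * ‖g m η‖ ^ 2) =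
      (jb (znorm m) ^ σ * Cg m) ^ 2 := by
    intro m
    rw [integral_const_mul, mul_pow, hsq _ σ (hjbp m), Real.sq_sqrt (hgint m)]
  have hb2 : Summable (fun m => (jb (znorm m) ^ σ * Cg m) ^ 2) :=
    hg2.congr fun m => hW m
  have ha2 : Summable (fun m => (jb (znorm m) ^ (-σ)) ^ 2) :=
    hκ.congr fun m => by
      rw [hsq _ (-σ) (hjbp m)]
      norm_num
  -- ℓ¹ bound on Cg
  have hCgeq : ∀ m, jb (znorm m) ^ (-σ) * (jb (znorm m) ^ σ * Cg m) = Cg m := by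
    intro m
    rw [← mul_assoc, ← Real.rpow_add (hjbp m), neg_add_cancel, Real.rpow_zero, one_mul]
  obtain ⟨hCgsum', hCgle'⟩ := tsum_cs (a := fun m => jb (znorm m) ^ (-σ))
    (b := fun m => jb (znorm m) ^ σ * Cg m)
    (fun m => Real.rpow_nonneg (hjbp m).le _)
    (fun m => mul_nonneg (Real.rpow_nonneg (hjbp m).le _) (hCnn m)) ha2 hb2
  have hCgsum : Summable Cg := hCgsum'.congr hCgeq
  have hCgle : ∑' m, Cg m ≤ K * Real.sqrt (∑' m : Fin d → ℤ,
      ∫ η : Fin d → ℝ, jb (znorm m) ^ (2 * σ) * ‖g m η‖ ^ 2) := by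
    have e1 : ∑' m, Cg m = ∑' m, (fun m => jb (znorm m) ^ (-σ)) m *
        (fun m => jb (znorm m) ^ σ * Cg m) m := tsum_congr fun m => (hCgeq m).symm
    rw [e1]
    refine hCgle'.trans (le_of_eq ?_)
    congr 1
    · rw [hK_def]
      congr 1
      refine tsum_congr fun m => ?_
      rw [hsq _ (-σ) (hjbp m)]
      norm_num
    · congr 1
      exact tsum_congr fun m => (hW m).symm
  -- pointwise Hölder bound
  have hpt : ∀ k ℓ : Fin d → ℤ,
      ‖∫ η : Fin d → ℝ, f k η * h ℓ * g (k - ℓ) (fun i => η i - t * (ℓ i : ℝ))‖ ≤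
        A k * B ℓ * Cg (k - ℓ) := by
    intro k ℓ
    have h0 := holder_pt (f k) (g (k - ℓ)) (h ℓ) (fun i => t * (ℓ i : ℝ)) (hf k) (hg (k - ℓ))
    refine le_trans h0 (le_of_eq ?_)
    rw [hA_def, hB_def, hCg_def]
    ring
  -- majorant on the product space
  set M : ((Fin d → ℤ) × (Fin d → ℤ)) → ℝ := fun p => A p.1 * B p.2 * Cg (p.1 - p.2)
    with hM_def
  set N : ((Fin d → ℤ) × (Fin d → ℤ)) → ℝ := fun p => Cg p.1 * (A (p.2 + p.1) * B p.2)
    with hN_def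
  have hABs : Summable (fun p : (Fin d → ℤ) × (Fin d → ℤ) => A (p.2 + p.1) * B p.2) →
      True := fun _ => trivial
  have hA2m : ∀ m : Fin d → ℤ, Summable (fun ℓ => A (ℓ + m) ^ 2) := by
    intro m
    exact ((Equiv.addRight m).summable_iff (f := fun k => A k ^ 2)).mpr hA2
  have hA2meq : ∀ m : Fin d → ℤ, ∑' ℓ, A (ℓ + m) ^ 2 = ∑' k, A k ^ 2 := by
    intro m
    exact ((Equiv.addRight m).tsum_eq (f := fun k => A k ^ 2))
  have hinner : ∀ m : Fin d → ℤ, Summable (fun ℓ => A (ℓ + m) * B ℓ) ∧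
      ∑' ℓ, A (ℓ + m) * B ℓ ≤ Real.sqrt (∑' k, A k ^ 2) * Real.sqrt (∑' k, B k ^ 2) := by
    intro m
    obtain ⟨hs, hle⟩ := tsum_cs (a := fun ℓ => A (ℓ + m)) (b := B)
      (fun ℓ => hAnn _) hBnn (hA2m m) hB2
    exact ⟨hs, by rwa [hA2meq m] at hle⟩
  have hNs : Summable N := by
    rw [summable_prod_of_nonneg (f := N)
      (fun p => mul_nonneg (hCnn _) (mul_nonneg (hAnn _) (hBnn _)))]
    constructor
    · intro m
      exact ((hinner m).1.mul_left (Cg m))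
    · apply Summable.of_nonneg_of_le
        (fun m => tsum_nonneg fun ℓ => mul_nonneg (hCnn _) (mul_nonneg (hAnn _) (hBnn _)))
        (fun m => ?_)
        (hCgsum.mul_right (Real.sqrt (∑' k, A k ^ 2) * Real.sqrt (∑' k, B k ^ 2)))
      show ∑' ℓ, N (m, ℓ) ≤ _
      rw [show (fun ℓ => N (m, ℓ)) = fun ℓ => Cg m * (A (ℓ + m) * B ℓ) from rfl,
        tsum_mul_left]
      exact mul_le_mul_of_nonneg_left (hinner m).2 (hCnn m)
  set e : ((Fin d → ℤ) × (Fin d → ℤ)) ≃ ((Fin d → ℤ) × (Fin d → ℤ)) :=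
    ⟨fun p => (p.2 + p.1, p.2), fun p => (p.1 - p.2, p.2),
      fun p => by simp, fun p => by simp⟩ with he_def
  have hMe : ∀ p, M (e p) = N p := by
    intro p
    show A (p.2 + p.1) * B p.2 * Cg (p.2 + p.1 - p.2) = _
    rw [add_sub_cancel_left, hN_def]
    ring
  have hMs : Summable M := e.summable_iff.mp (hNs.congr fun p => (hMe p).symm)
  have hMeq : ∑' p, M p = ∑' p, N p := by
    rw [← e.tsum_eq M]
    exact tsum_congr hMe
  -- sum of the majorant
  have hNbound : ∑' p, N p ≤ (∑' m, Cg m) *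
      (Real.sqrt (∑' k, A k ^ 2) * Real.sqrt (∑' k, B k ^ 2)) := by
    rw [Summable.tsum_prod hNs]
    calc ∑' m, ∑' ℓ, N (m, ℓ)
        ≤ ∑' m, Cg m * (Real.sqrt (∑' k, A k ^ 2) * Real.sqrt (∑' k, B k ^ 2)) := by
          apply Summable.tsum_le_tsum _ _ (hCgsum.mul_right _)
          · intro m
            show ∑' ℓ, N (m, ℓ) ≤ _
            rw [show (fun ℓ => N (m, ℓ)) = fun ℓ => Cg m * (A (ℓ + m) * B ℓ) from rfl,
              tsum_mul_left]
            exact mul_le_mul_of_nonneg_left (hinner m).2 (hCnn m)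
          · rw [summable_prod_of_nonneg (f := N)
              (fun p => mul_nonneg (hCnn _) (mul_nonneg (hAnn _) (hBnn _)))] at hNs
            exact hNs.2
      _ = (∑' m, Cg m) * (Real.sqrt (∑' k, A k ^ 2) * Real.sqrt (∑' k, B k ^ 2)) :=
          tsum_mul_right
  -- summability of the integrals
  have hInorm : Summable (fun p : (Fin d → ℤ) × (Fin d → ℤ) =>
      ‖∫ η : Fin d → ℝ, f p.1 η * h p.2 * g (p.1 - p.2) (fun i => η i - t * (p.2 i : ℝ))‖) :=
    Summable.of_nonneg_of_le (fun p => norm_nonneg _) (fun p => hpt p.1 p.2) hMs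
  have hIs : Summable (fun p : (Fin d → ℤ) × (Fin d → ℤ) =>
      ∫ η : Fin d → ℝ, f p.1 η * h p.2 * g (p.1 - p.2) (fun i => η i - t * (p.2 i : ℝ))) :=
    hInorm.of_norm
  -- put everything together
  have hsplit : (∑' k : Fin d → ℤ, ∑' ℓ : Fin d → ℤ,
      ∫ η : Fin d → ℝ, f k η * h ℓ * g (k - ℓ) (fun i => η i - t * (ℓ i : ℝ))) =
      ∑' p : (Fin d → ℤ) × (Fin d → ℤ),
        ∫ η : Fin d → ℝ, f p.1 η * h p.2 * g (p.1 - p.2) (fun i => η i - t * (p.2 i : ℝ)) :=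
    (Summable.tsum_prod hIs).symm
  rw [hsplit]
  have step1 : ‖∑' p : (Fin d → ℤ) × (Fin d → ℤ),
      ∫ η : Fin d → ℝ, f p.1 η * h p.2 * g (p.1 - p.2) (fun i => η i - t * (p.2 i : ℝ))‖ ≤
      ∑' p, M p := by
    refine (norm_tsum_le_tsum_norm hInorm).trans ?_
    exact Summable.tsum_le_tsum (fun p => hpt p.1 p.2) hInorm hMs
  have hAeq : Real.sqrt (∑' k, A k ^ 2) =
      Real.sqrt (∑' k : Fin d → ℤ, ∫ η : Fin d → ℝ, ‖f k η‖ ^ 2) := by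
    congr 1
    exact tsum_congr fun k => Real.sq_sqrt (hfint k)
  have hBeq : Real.sqrt (∑' k, B k ^ 2) =
      Real.sqrt (∑' k : Fin d → ℤ, ‖h k‖ ^ 2) := rfl
  set SF := Real.sqrt (∑' k : Fin d → ℤ, ∫ η : Fin d → ℝ, ‖f k η‖ ^ 2) with hSF
  set SW := Real.sqrt (∑' k : Fin d → ℤ,
      ∫ η : Fin d → ℝ, jb (znorm k) ^ (2 * σ) * ‖g k η‖ ^ 2) with hSW
  set SH := Real.sqrt (∑' k : Fin d → ℤ, ‖h k‖ ^ 2) with hSH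
  have hSF0 : 0 ≤ SF := Real.sqrt_nonneg _
  have hSW0 : 0 ≤ SW := Real.sqrt_nonneg _
  have hSH0 : 0 ≤ SH := Real.sqrt_nonneg _
  refine step1.trans ?_
  rw [hMeq]
  refine hNbound.trans ?_
  rw [hAeq, hBeq]
  calc (∑' m, Cg m) * (SF * SH) ≤ (K * SW) * (SF * SH) := by
        apply mul_le_mul_of_nonneg_right hCgle (mul_nonneg hSF0 hSH0)
    _ = K * SF * SW * SH := by ring
    _ ≤ (K + 1) * SF * SW * SH := by
        have : 0 ≤ SF * SW * SH := by positivity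
        nlinarith
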